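/- arXiv:1709.00732 — 7 statements merged into one kernel-verified Lean document; each statement's English description precedes it below -/
import Mathlib

section
/- Let Δ ∈ ℤ[X] be a polynomial with nonzero constant coefficient that is self-reciprocal (its coefficient sequence is palindromic, i.e., Δ.reverse = Δ) and satisfies Δ(1) = 1 or Δ(1) = -1. If α ∈ ℂ with |α| = 1 is a root of Δ (i.e., the evaluation of Δ at α under the algebra map ℤ[X] → ℂ is zero), then there exists a polynomial δ ∈ ℤ[X] such that: δ is irreducible in ℤ[X], δ divides Δ, δ has nonzero constant coefficient, δ is self-reciprocal (δ.reverse = δ), δ(1) = 1 or δ(1) = -1, and α is a root of δ. -/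
open Polynomial

private lemma rev_rev {p : Polynomial ℤ} (h : p.coeff 0 ≠ 0) : p.reverse.reverse = p := by
  have ht : p.natTrailingDegree = 0 := natTrailingDegree_eq_zero.2 (Or.inr h)
  have hnd : p.reverse.natDegree = p.natDegree := by
    rw [reverse_natDegree, ht, Nat.sub_zero]
  ext n
  rw [coeff_reverse, coeff_reverse, hnd, revAt_invol]

private lemma isPrimitive_reverse {p : Polynomial ℤ} (h : p.IsPrimitive) :
    p.reverse.IsPrimitive := by
  intro r hr
  apply h r
  rw [C_dvd_iff_dvd_coeff] at hr ⊢
  intro i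
  rcases le_or_gt i p.natDegree with hi | hi
  · have := hr (revAt p.natDegree i)
    rwa [coeff_reverse, revAt_invol] at this
  · rw [coeff_eq_zero_of_natDegree_lt hi]
    exact dvd_zero r

private lemma eval_one_reverse (p : Polynomial ℤ) : p.reverse.eval 1 = p.eval 1 := by
  letI : Invertible (1 : ℤ) := invertibleOne
  have h := eval₂_reverse_mul_pow (RingHom.id ℤ) (1 : ℤ) p
  rw [invOf_one, one_pow, mul_one] at h
  exact h

/-- Every root on the unit circle of an Alexander polynomial is also a root of an
irreducible Alexander polynomial. -/
theorem irreducible_alexander_factor_of_unit_circle_root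
    (Δ : Polynomial ℤ) (h0 : Δ.coeff 0 ≠ 0) (hsym : Δ.reverse = Δ)
    (h1 : Δ.eval 1 = 1 ∨ Δ.eval 1 = -1)
    (α : ℂ) (hα : ‖α‖ = 1) (hroot : Polynomial.aeval α Δ = 0) :
    ∃ δ : Polynomial ℤ, Irreducible δ ∧ δ ∣ Δ ∧ δ.coeff 0 ≠ 0 ∧ δ.reverse = δ ∧
      (δ.eval 1 = 1 ∨ δ.eval 1 = -1) ∧ Polynomial.aeval α δ = 0 := by
  have hΔ0 : Δ ≠ 0 := by
    rintro rfl
    simp at h1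
  -- α is nonzero and its conjugate is its inverse
  have hαne : α ≠ 0 := by
    intro h
    rw [h] at hα
    simp at hα
  have hconj : α * (starRingEnd ℂ) α = 1 := by
    rw [Complex.mul_conj, Complex.normSq_eq_norm_sq, hα]
    norm_num
  -- extract an irreducible factor of Δ having α as a root
  obtain ⟨u, hu⟩ := UniqueFactorizationMonoid.factors_prod hΔ0
  have hprodzero :
      (Multiset.map (fun p => aeval α p) (UniqueFactorizationMonoid.factors Δ)).prod = 0 := by
    have h : aeval α ((UniqueFactorizationMonoid.factors Δ).prod * (u : Polynomial ℤ)) = 0 := by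
      rw [hu]; exact hroot
    rw [map_mul] at h
    have huu : IsUnit (aeval α (u : Polynomial ℤ)) := u.isUnit.map (aeval α)
    have h2 := (mul_eq_zero.mp h).resolve_right huu.ne_zero
    rw [← map_multiset_prod]
    exact h2
  have : (0 : ℂ) ∈ Multiset.map (fun p => aeval α p) (UniqueFactorizationMonoid.factors Δ) :=
    Multiset.prod_eq_zero_iff.mp hprodzero
  obtain ⟨δ, hδmem, hδroot⟩ := Multiset.mem_map.mp this
  have hδirr : Irreducible δ := UniqueFactorizationMonoid.irreducible_of_factor δ hδmem
  have hδdvd : δ ∣ Δ := UniqueFactorizationMonoid.dvd_of_mem_factors hδmem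
  -- constant coefficient of δ is nonzero
  obtain ⟨q, hq⟩ := id hδdvd
  have hδ0 : δ.coeff 0 ≠ 0 := by
    intro h
    apply h0
    rw [hq, mul_coeff_zero, h, zero_mul]
  have hδne : δ ≠ 0 := hδirr.ne_zero
  -- δ(1) = ±1
  have hδeval1 : δ.eval 1 = 1 ∨ δ.eval 1 = -1 := by
    have hdvd1 : δ.eval 1 ∣ Δ.eval 1 := ⟨q.eval 1, by rw [hq, eval_mul]⟩
    have : IsUnit (δ.eval 1) := by
      rcases h1 with h | h <;> rw [h] at hdvd1
      · exact isUnit_of_dvd_one hdvd1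
      · exact isUnit_of_dvd_unit hdvd1 (by simp)
    exact Int.isUnit_iff.mp this
  -- δ has positive degree
  have hdeg : 0 < δ.natDegree := by
    rcases Nat.eq_zero_or_pos δ.natDegree with h | h
    · exfalso
      obtain ⟨c, hc⟩ := natDegree_eq_zero.mp h
      rw [← hc] at hδroot hδne
      simp only [aeval_C] at hδroot
      have : (c : ℂ) = 0 := hδroot
      have : c = 0 := by exact_mod_cast this
      exact hδne (by rw [this, map_zero])
    · exact h
  -- δ is primitive
  have hprim : δ.IsPrimitive := by
    intro r hr
    obtain ⟨s, hs⟩ := hr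
    rcases hδirr.isUnit_or_isUnit hs with h | h
    · exact isUnit_C.mp h
    · exfalso
      obtain ⟨v, hv, hvs⟩ := Polynomial.isUnit_iff.mp h
      rw [← hvs, ← C_mul] at hs
      rw [hs, natDegree_C] at hdeg
      exact Nat.lt_irrefl 0 hdeg
  have hprimrev : δ.reverse.IsPrimitive := isPrimitive_reverse hprim
  -- conjugate of α is a root of δ
  have hconjroot : aeval ((starRingEnd ℂ) α) δ = 0 := by
    have h := Polynomial.aeval_algHom_apply (starRingEnd ℂ).toIntAlgHom α δ
    rw [RingHom.toIntAlgHom_apply] at h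
    rw [h]
    rw [RingHom.toIntAlgHom_apply, hδroot, map_zero]
  -- α is a root of reverse δ
  have hrevroot : aeval α δ.reverse = 0 := by
    letI : Invertible ((starRingEnd ℂ) α) :=
      ⟨α, hconj, by rw [mul_comm] at hconj; exact hconj⟩
    have hinv : (⅟((starRingEnd ℂ) α) : ℂ) = α := rfl
    have := (eval₂_reverse_eq_zero_iff (algebraMap ℤ ℂ) ((starRingEnd ℂ) α) δ).mpr
      (by rw [← aeval_def]; exact hconjroot)
    rw [hinv, ← aeval_def] at this
    exact this
  -- pass to ℚ[X] to show reverse δ is associated to δ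
  set δQ := δ.map (algebraMap ℤ ℚ) with hδQ
  set δRQ := δ.reverse.map (algebraMap ℤ ℚ) with hδRQ
  have hδQne : δQ ≠ 0 := by
    intro h
    apply hδne
    apply Polynomial.map_injective _ (algebraMap ℤ ℚ).injective_int
    rw [Polynomial.map_zero]
    exact h
  have hδRQne : δRQ ≠ 0 := by
    intro h
    apply reverse_eq_zero.not.mpr hδne
    apply Polynomial.map_injective _ (algebraMap ℤ ℚ).injective_int
    rw [Polynomial.map_zero]
    exact h
  have hrootQ : aeval α δQ = 0 := by rw [hδQ, aeval_map_algebraMap]; exact hδroot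
  have hrootRQ : aeval α δRQ = 0 := by rw [hδRQ, aeval_map_algebraMap]; exact hrevroot
  have hint : IsIntegral ℚ α := (IsAlgebraic.isIntegral ⟨δQ, hδQne, hrootQ⟩)
  have hm1 : minpoly ℚ α ∣ δQ := minpoly.dvd ℚ α hrootQ
  have hm2 : minpoly ℚ α ∣ δRQ := minpoly.dvd ℚ α hrootRQ
  have hδQirr : Irreducible δQ :=
    (hprim.irreducible_iff_irreducible_map_fraction_map (K := ℚ)).mp hδirr
  -- δQ is associated to the minimal polynomial
  have hassoc1 : Associated δQ (minpoly ℚ α) := by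
    obtain ⟨c, hc⟩ := hm1
    rcases hδQirr.isUnit_or_isUnit hc with h | h
    · exact absurd h (minpoly.not_isUnit ℚ α)
    · exact Associated.symm ⟨h.unit, by rw [h.unit_spec]; exact hc.symm⟩
  -- degrees match, so δRQ is also associated to minpoly
  have hdegrev : δ.reverse.natDegree = δ.natDegree := by
    rw [reverse_natDegree, natTrailingDegree_eq_zero.2 (Or.inr hδ0), Nat.sub_zero]
  have hdegQ : δRQ.natDegree = δQ.natDegree := by
    rw [hδQ, hδRQ, natDegree_map_eq_of_injective (algebraMap ℤ ℚ).injective_int,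
      natDegree_map_eq_of_injective (algebraMap ℤ ℚ).injective_int, hdegrev]
  have hassoc2 : Associated (minpoly ℚ α) δRQ := by
    obtain ⟨c, hc⟩ := hm2
    have hcne : c ≠ 0 := by
      rintro rfl
      rw [mul_zero] at hc
      exact hδRQne hc
    have hmne : minpoly ℚ α ≠ 0 := minpoly.ne_zero hint
    have hdegc : c.natDegree = 0 := by
      have h1 : δRQ.natDegree = (minpoly ℚ α).natDegree + c.natDegree := by
        rw [hc, natDegree_mul hmne hcne]
      have h2 : δQ.natDegree = (minpoly ℚ α).natDegree := by
        obtain ⟨v, hv⟩ := hassoc1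
        rw [← hv, natDegree_mul hδQne v.isUnit.ne_zero,
          natDegree_eq_zero_of_isUnit v.isUnit, add_zero]
      omega
    have hcu : IsUnit c := by
      obtain ⟨a, ha⟩ := natDegree_eq_zero.mp hdegc
      rw [← ha]
      rw [← ha] at hcne
      exact isUnit_C.mpr (IsUnit.mk0 a (by rintro rfl; simp at hcne))
    exact ⟨hcu.unit, by rw [hcu.unit_spec]; exact hc.symm⟩
  have hassocQ : Associated δQ δRQ := hassoc1.trans hassoc2
  -- descend to ℤ[X]
  have hdvd1 : δ ∣ δ.reverse :=
    hprim.dvd_of_fraction_map_dvd_fraction_map (K := ℚ) hassocQ.dvd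
  have hdvd2 : δ.reverse ∣ δ :=
    hprimrev.dvd_of_fraction_map_dvd_fraction_map (K := ℚ) hassocQ.symm.dvd
  have hassocZ : Associated δ δ.reverse := associated_of_dvd_dvd hdvd1 hdvd2
  obtain ⟨w, hw⟩ := hassocZ
  obtain ⟨r, hr, hrw⟩ := Polynomial.isUnit_iff.mp w.isUnit
  rcases Int.isUnit_iff.mp hr with rfl | rfl
  · -- reverse δ = δ
    refine ⟨δ, hδirr, hδdvd, hδ0, ?_, hδeval1, hδroot⟩
    rw [← hw, ← hrw]
    simp
  · -- reverse δ = -δ : impossible since δ(1) = ±1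
    exfalso
    have : δ.reverse = -δ := by
      rw [← hw, ← hrw]
      simp
    have h := eval_one_reverse δ
    rw [this, eval_neg] at h
    rcases hδeval1 with h' | h' <;> rw [h'] at h <;> norm_num at h
end

section
/- Let δ ∈ ℤ[X] be irreducible in ℤ[X], with nonzero constant coefficient (δ.coeff 0 ≠ 0) and with δ(1) ≠ 0. Suppose there exists α ∈ ℂ with |α| = 1 such that α is a root of δ (the evaluation of δ at α under the algebra map ℤ[X] → ℂ is zero). Then δ is self-reciprocal: δ.reverse = δ. -/
open Polynomial

/-- An irreducible integer polynomial with nonzero constant coefficient, not vanishing at 1,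
that has a root on the unit circle, is self-reciprocal. -/
theorem irreducible_with_unit_circle_root_is_selfReciprocal
    (δ : Polynomial ℤ) (hirr : Irreducible δ) (h0 : δ.coeff 0 ≠ 0)
    (h1 : δ.eval 1 ≠ 0)
    (α : ℂ) (hα : ‖α‖ = 1) (hroot : Polynomial.aeval α δ = 0) :
    δ.reverse = δ := by
  have hδ0 : δ ≠ 0 := fun h => h0 (by simp [h])
  have hα0 : α ≠ 0 := by
    intro h; rw [h] at hα; simp at hα
  -- δ is not constant
  have hd0 : δ.natDegree ≠ 0 := by
    intro h
    rw [eq_C_of_natDegree_eq_zero h] at hroot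
    rw [aeval_C] at hroot
    exact h0 (by simpa using hroot)
  -- δ is primitive
  have hprim : δ.IsPrimitive := by
    intro r hr
    obtain ⟨q, hq⟩ := hr
    rcases hirr.isUnit_or_isUnit hq with h | h
    · exact isUnit_C.mp h
    · exfalso; apply hd0
      have := natDegree_eq_zero_of_isUnit h
      rw [hq, natDegree_mul (fun hc => hδ0 (by simp [hq, hc]))
        (fun hc => hδ0 (by simp [hq, hc])), natDegree_C, this]
  -- conj α = α⁻¹ is a root of δ
  have hconj : aeval ((starRingEnd ℂ) α) δ = 0 := by
    have h := aeval_algHom_apply ((starRingEnd ℂ).toIntAlgHom) α δ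
    rw [hroot, map_zero] at h
    simpa using h
  have hinv : aeval α⁻¹ δ = 0 := by
    rw [Complex.inv_eq_conj hα]; exact hconj
  -- α is a root of δ.reverse
  haveI : Invertible (α⁻¹) := invertibleOfNonzero (inv_ne_zero hα0)
  have hrev : aeval α δ.reverse = 0 := by
    have h := (eval₂_reverse_eq_zero_iff (algebraMap ℤ ℂ) α⁻¹ δ).mpr
      (by rw [← aeval_def]; exact hinv)
    rwa [invOf_eq_inv, inv_inv, ← aeval_def] at h
  -- pass to ℚ
  set q : Polynomial ℚ := δ.map (Int.castRingHom ℚ) with hq_def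
  have hq0 : q ≠ 0 := by
    rw [hq_def, Ne, Polynomial.map_eq_zero_iff (Int.cast_injective)]
    exact hδ0
  have hqirr : Irreducible q :=
    (Polynomial.IsPrimitive.Int.irreducible_iff_irreducible_map_cast hprim).mp hirr
  have hqroot : aeval α q = 0 := by
    rw [hq_def]
    have : (Int.castRingHom ℚ) = algebraMap ℤ ℚ := rfl
    rw [this, aeval_map_algebraMap]; exact hroot
  have hqrevroot : aeval α (δ.reverse.map (Int.castRingHom ℚ)) = 0 := by
    have : (Int.castRingHom ℚ) = algebraMap ℤ ℚ := rfl
    rw [this, aeval_map_algebraMap]; exact hrev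
  have hint : IsIntegral ℚ α := (IsAlgebraic.isIntegral ⟨q, hq0, hqroot⟩)
  have hmindvd : minpoly ℚ α ∣ q := minpoly.dvd ℚ α hqroot
  have hassoc : Associated (minpoly ℚ α) q :=
    (minpoly.irreducible hint).associated_of_dvd hqirr hmindvd
  have hqdvd : q ∣ δ.reverse.map (Int.castRingHom ℚ) :=
    hassoc.symm.dvd.trans (minpoly.dvd ℚ α hqrevroot)
  -- δ.reverse is primitive
  have hrevprim : δ.reverse.IsPrimitive := by
    intro r hr
    apply hprim r
    rw [C_dvd_iff_dvd_coeff] at hr ⊢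
    intro i
    by_cases hi : i ≤ δ.natDegree
    · have := hr (δ.natDegree - i)
      rwa [coeff_reverse, revAt_le tsub_le_self, tsub_tsub_cancel_of_le hi] at this
    · rw [coeff_eq_zero_of_natDegree_lt (lt_of_not_ge hi)]
      exact dvd_zero r
  -- back to ℤ
  have hdvd : δ ∣ δ.reverse :=
    (Polynomial.IsPrimitive.Int.dvd_iff_map_cast_dvd_map_cast δ δ.reverse hprim).mpr hqdvd
  -- degrees are equal
  have hdegrev : δ.reverse.natDegree = δ.natDegree := by
    rw [reverse_natDegree, natTrailingDegree_eq_zero_of_constantCoeff_ne_zero h0, tsub_zero]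
  obtain ⟨c, hc⟩ := hdvd
  have hrev0 : δ.reverse ≠ 0 := by
    intro h
    apply h0
    have hcr := coeff_reverse δ δ.natDegree
    rw [h, coeff_zero, revAt_le le_rfl, tsub_self] at hcr
    exact hcr.symm
  have hc0 : c ≠ 0 := fun h => hrev0 (by rw [hc, h, mul_zero])
  have hcdeg : c.natDegree = 0 := by
    have := congrArg natDegree hc
    rw [hdegrev, natDegree_mul hδ0 hc0] at this
    omega
  obtain ⟨a, ha⟩ : ∃ a : ℤ, c = C a := ⟨c.coeff 0, eq_C_of_natDegree_eq_zero hcdeg⟩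
  -- eval at 1: reverse has same value
  have heval1 : δ.reverse.eval 1 = δ.eval 1 := by
    haveI : Invertible (1 : ℤ) := invertibleOne
    have h := eval₂_reverse_mul_pow (RingHom.id ℤ) 1 δ
    rw [invOf_one, one_pow, mul_one] at h
    exact h
  have ha1 : a = 1 := by
    rw [hc, ha, eval_mul, eval_C] at heval1
    exact mul_left_cancel₀ h1 (by rw [heval1, mul_one])
  rw [hc, ha, ha1, map_one, mul_one]
end

section
/- The set of complex numbers β with |β| = 1 for which there exists a polynomial p ∈ ℤ[X] of degree 4 with nonzero constant coefficient, self-reciprocal (p.reverse = p), satisfying p(1) = 1 or p(1) = -1, having β as a root, and such that the set {z ∈ ℂ : |z| = 1 and p(z) = 0} has exactly two elements, is dense in the unit circle {z ∈ ℂ : |z| = 1}. -/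
open Polynomial


lemma sqrt_sub_sqrt_le (A B : ℝ) (hB : 0 ≤ B) (h : B ≤ A) :
    Real.sqrt A - Real.sqrt B ≤ Real.sqrt (A - B) := by
  have h1 : A ≤ (Real.sqrt B + Real.sqrt (A - B))^2 := by
    nlinarith [Real.sq_sqrt hB, Real.sq_sqrt (sub_nonneg.2 h), Real.sqrt_nonneg B,
      Real.sqrt_nonneg (A-B)]
  have h2 : Real.sqrt A ≤ Real.sqrt B + Real.sqrt (A - B) := by
    calc Real.sqrt A ≤ Real.sqrt ((Real.sqrt B + Real.sqrt (A - B))^2) := Real.sqrt_le_sqrt h1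
    _ = _ := Real.sqrt_sq (by positivity)
  linarith

lemma abs_sqrt_sub_sqrt (A B : ℝ) (hA : 0 ≤ A) (hB : 0 ≤ B) :
    |Real.sqrt A - Real.sqrt B| ≤ Real.sqrt |A - B| := by
  rcases le_total B A with h | h
  · rw [abs_of_nonneg (sub_nonneg.2 (Real.sqrt_le_sqrt h)), abs_of_nonneg (sub_nonneg.2 h)]
    exact sqrt_sub_sqrt_le A B hB h
  · rw [abs_sub_comm, abs_sub_comm A B,
      abs_of_nonneg (sub_nonneg.2 (Real.sqrt_le_sqrt h)), abs_of_nonneg (sub_nonneg.2 h)]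
    exact sqrt_sub_sqrt_le B A hA h


noncomputable def Pa (n a : ℤ) : Polynomial ℤ :=
  C (-n) * X ^ 4 + C a * X ^ 3 + C (2 * n - 2 * a + 1) * X ^ 2 + C a * X + C (-n)

lemma Pa_natDegree (n a : ℤ) (hn : 1 ≤ n) : (Pa n a).natDegree = 4 := by
  unfold Pa; compute_degree!; omega

lemma Pa_coeff_zero (n a : ℤ) : (Pa n a).coeff 0 = -n := by
  simp [Pa, coeff_X_pow]

lemma Pa_eval_one (n a : ℤ) : (Pa n a).eval 1 = 1 := by
  simp [Pa]; ring

lemma Pa_reverse (n a : ℤ) (hn : 1 ≤ n) : (Pa n a).reverse = Pa n a := by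
  rw [Polynomial.reverse, Pa_natDegree n a hn]
  have : Pa n a = C (-n) * X ^ 4 + C a * X ^ 3 + C (2 * n - 2 * a + 1) * X ^ 2 + C a * X ^ 1 + C (-n) * X ^ 0 := by
    unfold Pa; ring
  rw [this]
  simp only [Polynomial.reflect_add, Polynomial.reflect_C_mul_X_pow]
  norm_num [Polynomial.revAt_le]
  ring

lemma Pa_eval_circle (n a : ℤ) (z : ℂ) (x0 x1 : ℝ)
    (h1 : (n:ℝ) * (x0 + x1) = a) (h2 : (n:ℝ) * (x0 * x1) = 2*a - 4*n - 1)
    (hz : ‖z‖ = 1) :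
    aeval z (Pa n a) = z ^ 2 * (-(n:ℂ)) * (((2*z.re : ℝ):ℂ) - (x0:ℂ)) * (((2*z.re : ℝ):ℂ) - (x1:ℂ)) := by
  have hz0 : z ≠ 0 := by intro h; rw [h] at hz; simp at hz
  have hw : z + z⁻¹ = ((2*z.re : ℝ) : ℂ) := by
    rw [Complex.inv_eq_conj hz, Complex.add_conj]
  have hc1 : (n:ℂ) * ((x0:ℂ) + (x1:ℂ)) = (a:ℂ) := by exact_mod_cast congrArg (Complex.ofReal) h1
  have hc2 : (n:ℂ) * ((x0:ℂ) * (x1:ℂ)) = 2*(a:ℂ) - 4*(n:ℂ) - 1 := by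
    exact_mod_cast congrArg (Complex.ofReal) h2
  have hfac : ∀ w : ℂ, -(n:ℂ) * w^2 + (a:ℂ)*w - (2*(a:ℂ) - 4*(n:ℂ) - 1)
      = -(n:ℂ)*(w - (x0:ℂ))*(w - (x1:ℂ)) := by
    intro w; linear_combination hc2 - w * hc1
  have key : aeval z (Pa n a) = z ^ 2 *
      (-(n:ℂ) * (z + z⁻¹) ^ 2 + (a:ℂ) * (z + z⁻¹) - (2*(a:ℂ) - 4*(n:ℂ) - 1)) := by
    simp [Pa, map_ofNat]
    field_simp
    ring
  rw [key, hfac (z + z⁻¹), hw]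
  ring

set_option maxHeartbeats 1000000 in
lemma alexander_aux (n a : ℤ) (hn : 1 ≤ n) (ha1 : 1 ≤ a) (ha2 : a ≤ 4*n) :
    ∃ x0 : ℝ, -2 < x0 ∧ x0 < 2 ∧
      (a:ℝ) - 2*n - Real.sqrt n ≤ n*x0 ∧ (n:ℝ)*x0 ≤ (a:ℝ) - 2*n ∧
      ∀ σ : ℝ, (σ = 1 ∨ σ = -1) →
        (⟨x0/2, σ * Real.sqrt (1 - (x0/2)^2)⟩ : ℂ) ∈ {β : ℂ | ‖β‖ = 1 ∧
          ∃ p : Polynomial ℤ, p.natDegree = 4 ∧ p.coeff 0 ≠ 0 ∧ p.reverse = p ∧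
            (p.eval 1 = 1 ∨ p.eval 1 = -1) ∧ Polynomial.aeval β p = 0 ∧
            {z : ℂ | ‖z‖ = 1 ∧ Polynomial.aeval z p = 0}.encard = 2} := by
  set D : ℝ := ((a:ℝ) - 4*n)^2 + 4*n with hD_def
  have hn' : (0:ℝ) < n := by exact_mod_cast hn.trans_lt' (by norm_num)
  have hD : (0:ℝ) < D := by positivity
  have hsq : Real.sqrt D ^ 2 = D := Real.sq_sqrt hD.le
  set x0 : ℝ := ((a:ℝ) - Real.sqrt D)/(2*n) with hx0_def
  set x1 : ℝ := ((a:ℝ) + Real.sqrt D)/(2*n) with hx1_def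
  have h1 : (n:ℝ) * (x0 + x1) = a := by
    rw [hx0_def, hx1_def]; field_simp; ring
  have h2 : (n:ℝ) * (x0 * x1) = 2*a - 4*n - 1 := by
    rw [hx0_def, hx1_def]; field_simp; nlinarith [hsq]
  have hgt : (4*(n:ℝ) - a) < Real.sqrt D := by
    nlinarith [Real.sqrt_nonneg D, hsq, (by positivity : (0:ℝ) < 4*(n:ℝ))]
  have ha2' : (a:ℝ) ≤ 4*n := by exact_mod_cast ha2
  have ha1' : (1:ℝ) ≤ a := by exact_mod_cast ha1
  have hx1gt : 2 < x1 := by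
    rw [hx1_def, lt_div_iff₀ (by positivity)]; nlinarith
  have hx0lt : x0 < 2 := by
    rw [hx0_def, div_lt_iff₀ (by positivity)]; nlinarith
  have hx0gt : -2 < x0 := by
    rw [hx0_def, lt_div_iff₀ (by positivity)]
    have : Real.sqrt D < (a:ℝ) + 4*n := by nlinarith [Real.sqrt_nonneg D, hsq]
    nlinarith
  have hnx : (n:ℝ) * x0 = ((a:ℝ) - Real.sqrt D)/2 := by
    rw [hx0_def]; field_simp
  have hsD : Real.sqrt D ≤ (4*(n:ℝ) - a) + 2 * Real.sqrt n := by
    nlinarith [Real.sqrt_nonneg D, hsq, Real.sq_sqrt hn'.le, Real.sqrt_nonneg (n:ℝ)]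
  refine ⟨x0, hx0gt, hx0lt, by rw [hnx]; linarith, by rw [hnx]; linarith, ?_⟩
  intro σ hσ
  have hσ2 : σ^2 = 1 := by rcases hσ with h | h <;> simp [h]
  set s : ℝ := Real.sqrt (1 - (x0/2)^2) with hs_def
  have hB : (0:ℝ) < 1 - (x0/2)^2 := by nlinarith
  have hs2 : s^2 = 1 - (x0/2)^2 := Real.sq_sqrt hB.le
  have hs_pos : 0 < s := Real.sqrt_pos.2 hB
  -- the two points
  set bp : ℂ := ⟨x0/2, s⟩ with hbp_def
  set bm : ℂ := ⟨x0/2, -s⟩ with hbm_def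
  have habs : ∀ τ : ℝ, τ = 1 ∨ τ = -1 → ‖(⟨x0/2, τ*s⟩ : ℂ)‖ = 1 := by
    intro τ hτ
    have hτ2 : τ^2 = 1 := by rcases hτ with h | h <;> simp [h]
    have h : Complex.normSq (⟨x0/2, τ*s⟩ : ℂ) = 1 := by
      rw [Complex.normSq_mk]; nlinarith
    rw [Complex.norm_def, h, Real.sqrt_one]
  have haeval : ∀ τ : ℝ, τ = 1 ∨ τ = -1 → aeval (⟨x0/2, τ*s⟩ : ℂ) (Pa n a) = 0 := by
    intro τ hτ
    rw [Pa_eval_circle n a _ x0 x1 h1 h2 (habs τ hτ)]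
    have hmid : (((2*((⟨x0/2, τ*s⟩:ℂ).re):ℝ):ℂ) - (x0:ℂ)) = 0 := by
      have : (⟨x0/2, τ*s⟩:ℂ).re = x0/2 := rfl
      rw [this]; push_cast; ring
    rw [hmid]; ring
  -- the root set
  have hset : {z : ℂ | ‖z‖ = 1 ∧ aeval z (Pa n a) = 0} = {bp, bm} := by
    ext z
    simp only [Set.mem_setOf_eq, Set.mem_insert_iff, Set.mem_singleton_iff]
    constructor
    · rintro ⟨hz1, hz2⟩
      rw [Pa_eval_circle n a z x0 x1 h1 h2 hz1] at hz2
      have hz0 : z ≠ 0 := by intro h; rw [h] at hz1; simp at hz1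
      have hn0 : (n:ℂ) ≠ 0 := by exact_mod_cast hn'.ne'
      have hre : (2*z.re:ℝ) = x0 ∨ (2*z.re:ℝ) = x1 := by
        rcases mul_eq_zero.mp hz2 with h | h
        · rcases mul_eq_zero.mp h with h' | h'
          · rcases mul_eq_zero.mp h' with h'' | h''
            · exact absurd h'' (pow_ne_zero 2 hz0)
            · exact absurd h'' (by simpa using hn0)
          · left
            have := sub_eq_zero.mp h'
            exact_mod_cast this
        · right
          have := sub_eq_zero.mp h
          exact_mod_cast this
      have hrele : z.re ≤ 1 := by
        calc z.re ≤ ‖z‖ := Complex.re_le_norm z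
        _ = 1 := hz1
      have hre0 : 2*z.re = x0 := by
        rcases hre with h | h
        · exact h
        · exfalso; linarith
      have hre' : z.re = x0/2 := by linarith
      have hnormsq : z.re^2 + z.im^2 = 1 := by
        have := Complex.sq_norm z
        rw [hz1] at this
        rw [Complex.normSq_apply] at this
        nlinarith
      have him2 : z.im^2 = s^2 := by rw [hs2]; nlinarith
      have him : z.im = s ∨ z.im = -s := mul_self_eq_mul_self_iff.mp (by nlinarith)
      rcases him with h | h
      · left; apply Complex.ext <;> simp [hbp_def, hre', h]
      · right; apply Complex.ext <;> simp [hbm_def, hre', h]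
    · intro h
      rcases h with h | h <;> subst h
      · have h1' := habs 1 (Or.inl rfl)
        have h2' := haeval 1 (Or.inl rfl)
        simp only [one_mul] at h1' h2'
        exact ⟨h1', h2'⟩
      · have h1' := habs (-1) (Or.inr rfl)
        have h2' := haeval (-1) (Or.inr rfl)
        simp only [neg_one_mul, neg_mul, one_mul] at h1' h2'
        exact ⟨h1', h2'⟩
  have hne : bp ≠ bm := by
    intro h
    have := congrArg Complex.im h
    simp [hbp_def, hbm_def] at this
    linarith
  have hencard : {z : ℂ | ‖z‖ = 1 ∧ aeval z (Pa n a) = 0}.encard = 2 := by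
    rw [hset]; exact Set.encard_pair hne
  refine ⟨habs σ hσ, Pa n a, Pa_natDegree n a hn, ?_, Pa_reverse n a hn,
    Or.inl (Pa_eval_one n a), haeval σ hσ, hencard⟩
  rw [Pa_coeff_zero]; omega


set_option maxHeartbeats 1000000 in
/-- There is a dense subset of the unit circle each point of which is the root of a quartic
Alexander polynomial having precisely two roots on the unit circle. -/
theorem dense_roots_of_quartic_alexander_polynomials :
    ∀ ω : ℂ, ‖ω‖ = 1 →
      ω ∈ closure {β : ℂ | ‖β‖ = 1 ∧
        ∃ p : Polynomial ℤ, p.natDegree = 4 ∧ p.coeff 0 ≠ 0 ∧ p.reverse = p ∧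
          (p.eval 1 = 1 ∨ p.eval 1 = -1) ∧ Polynomial.aeval β p = 0 ∧
          {z : ℂ | ‖z‖ = 1 ∧ Polynomial.aeval z p = 0}.encard = 2} := by
  intro ω hω
  rw [Metric.mem_closure_iff]
  intro ε hε
  set R : ℝ := 1 + 2/ε + 8/ε^2 with hR_def
  have hR : 0 < R := by positivity
  set n : ℤ := max 1 ⌈R^2⌉ with hn_def
  have hn : 1 ≤ n := le_max_left _ _
  have hn' : (0:ℝ) < n := by
    have : (0:ℤ) < n := by omega
    exact_mod_cast this
  have hnR : R ≤ Real.sqrt n := by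
    have h1 : R^2 ≤ (n:ℝ) := by
      have h2 := Int.le_ceil (R^2)
      have h3 : (⌈R^2⌉:ℝ) ≤ (n:ℝ) := Int.cast_le.mpr (le_max_right 1 ⌈R^2⌉)
      linarith
    calc R = Real.sqrt (R^2) := (Real.sqrt_sq hR.le).symm
    _ ≤ Real.sqrt n := Real.sqrt_le_sqrt h1
  have hre1 : |ω.re| ≤ 1 := by
    calc |ω.re| ≤ ‖ω‖ := Complex.abs_re_le_norm ω
    _ = 1 := hω
  have hre1' := abs_le.mp hre1
  set u : ℝ := 2*ω.re + 2 with hu_def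
  have hu0 : 0 ≤ u := by simp only [hu_def]; linarith
  have hu4 : u ≤ 4 := by simp only [hu_def]; linarith
  set a : ℤ := max 1 ⌊(n:ℝ)*u⌋ with ha_def
  have ha1 : 1 ≤ a := le_max_left _ _
  have ha2 : a ≤ 4*n := by
    have h1 : ⌊(n:ℝ)*u⌋ ≤ 4*n := by
      have : (n:ℝ)*u ≤ ((4*n : ℤ):ℝ) := by push_cast; nlinarith
      calc ⌊(n:ℝ)*u⌋ ≤ ⌊((4*n : ℤ):ℝ)⌋ := Int.floor_le_floor this
      _ = 4*n := Int.floor_intCast _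
    have h2 : (1:ℤ) ≤ 4*n := by omega
    exact max_le h2 h1
  have hab : |(a:ℝ) - (n:ℝ)*u| ≤ 1 := by
    have hfl := Int.floor_le ((n:ℝ)*u)
    have hfg := Int.lt_floor_add_one ((n:ℝ)*u)
    rcases le_or_gt 1 ⌊(n:ℝ)*u⌋ with h | h
    · have he : a = ⌊(n:ℝ)*u⌋ := max_eq_right h
      rw [he, abs_le]; constructor <;> linarith
    · have he : a = 1 := max_eq_left (by omega)
      have hb : ((⌊(n:ℝ)*u⌋ : ℤ):ℝ) ≤ 0 := by exact_mod_cast Int.le_of_lt_add_one (by omega)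
      have hnu0 : 0 ≤ (n:ℝ)*u := by positivity
      rw [he, abs_le]; push_cast; constructor <;> linarith
  obtain ⟨x0, hx0gt, hx0lt, hlow, hup, hmem⟩ := alexander_aux n a hn ha1 ha2
  have hsn : 0 < Real.sqrt n := Real.sqrt_pos.2 hn'
  have hsn1 : 1 ≤ Real.sqrt n := by
    rw [show (1:ℝ) = Real.sqrt 1 by simp]
    exact Real.sqrt_le_sqrt (by exact_mod_cast hn)
  have hnsq : Real.sqrt n * Real.sqrt n = n := Real.mul_self_sqrt hn'.le
  have hdiff : |x0 - 2*ω.re| ≤ 2/Real.sqrt n := by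
    have h1 : |(n:ℝ)*x0 - (n:ℝ)*(2*ω.re)| ≤ Real.sqrt n + 1 := by
      have h3 := abs_le.mp hab
      rw [show (n:ℝ)*x0 - (n:ℝ)*(2*ω.re) = (n:ℝ)*x0 - ((n:ℝ)*u - 2*n) by rw [hu_def]; ring,
        abs_le]
      constructor <;> linarith
    have h4 : |(n:ℝ)*x0 - (n:ℝ)*(2*ω.re)| = (n:ℝ) * |x0 - 2*ω.re| := by
      rw [show (n:ℝ)*x0 - (n:ℝ)*(2*ω.re) = (n:ℝ)*(x0-2*ω.re) by ring, abs_mul, abs_of_pos hn']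
    rw [h4] at h1
    rw [le_div_iff₀ hsn]
    nlinarith [abs_nonneg (x0 - 2*ω.re)]
  set s : ℝ := Real.sqrt (1 - (x0/2)^2) with hs_def
  have hs0 : 0 ≤ s := Real.sqrt_nonneg _
  set σ : ℝ := if 0 ≤ ω.im then 1 else -1 with hσ_def
  have hσ : σ = 1 ∨ σ = -1 := by rw [hσ_def]; split_ifs <;> simp
  refine ⟨⟨x0/2, σ * s⟩, hmem σ hσ, ?_⟩
  have hsq_abs : ω.re^2 + ω.im^2 = 1 := by
    have h := Complex.sq_norm ω
    rw [hω, Complex.normSq_apply] at h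
    nlinarith
  set t : ℝ := Real.sqrt (1 - ω.re^2) with ht_def
  have ht : |ω.im| = t := by
    rw [ht_def, ← Real.sqrt_sq_eq_abs]; congr 1; linarith
  have hd2 : |x0/2 - ω.re| ≤ 1/Real.sqrt n := by
    rw [show x0/2 - ω.re = (x0 - 2*ω.re)/2 by ring, abs_div, abs_two]
    rw [div_le_div_iff₀ (by norm_num) hsn]
    rw [le_div_iff₀ hsn] at hdiff
    linarith
  have himd : |ω.im - σ * s| = |t - s| := by
    rcases le_or_gt 0 ω.im with h | h
    · have hσ1 : σ = 1 := if_pos h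
      have he : ω.im = t := by rw [← ht, abs_of_nonneg h]
      rw [hσ1, he, one_mul]
    · have hσ1 : σ = -1 := if_neg (not_le.2 h)
      have he : ω.im = -t := by
        have := ht
        rw [abs_of_neg h] at this
        linarith
      rw [hσ1, he, show -t - (-1)*s = -(t - s) by ring, abs_neg]
  have hB0 : (0:ℝ) ≤ 1 - (x0/2)^2 := by nlinarith
  have hA0 : (0:ℝ) ≤ 1 - ω.re^2 := by nlinarith [hre1'.1, hre1'.2]
  have hAB : |(1 - ω.re^2) - (1 - (x0/2)^2)| ≤ 2/Real.sqrt n := by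
    rw [show (1 - ω.re^2) - (1 - (x0/2)^2) = (x0/2 - ω.re) * (x0/2 + ω.re) by ring, abs_mul]
    have h5 : |x0/2 + ω.re| ≤ 2 := by
      rw [abs_le]; constructor <;> nlinarith [hre1'.1, hre1'.2]
    calc |x0/2 - ω.re| * |x0/2 + ω.re| ≤ (1/Real.sqrt n) * 2 :=
          mul_le_mul hd2 h5 (abs_nonneg _) (by positivity)
    _ = 2/Real.sqrt n := by ring
  have himb : |t - s| ≤ Real.sqrt (2/Real.sqrt n) := by
    calc |t - s| ≤ Real.sqrt |(1 - ω.re^2) - (1 - (x0/2)^2)| :=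
          abs_sqrt_sub_sqrt _ _ hA0 hB0
    _ ≤ Real.sqrt (2/Real.sqrt n) := Real.sqrt_le_sqrt hAB
  rw [Complex.dist_eq]
  have hre_diff : (ω - ⟨x0/2, σ*s⟩ : ℂ).re = ω.re - x0/2 := rfl
  have him_diff : (ω - ⟨x0/2, σ*s⟩ : ℂ).im = ω.im - σ*s := rfl
  have hfin : ‖ω - ⟨x0/2, σ*s⟩‖ ≤ 1/Real.sqrt n + Real.sqrt (2/Real.sqrt n) := by
    calc ‖ω - ⟨x0/2, σ*s⟩‖
        ≤ |(ω - ⟨x0/2, σ*s⟩ : ℂ).re| + |(ω - ⟨x0/2, σ*s⟩ : ℂ).im| :=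
          Complex.norm_le_abs_re_add_abs_im _
    _ = |x0/2 - ω.re| + |t - s| := by rw [hre_diff, him_diff, himd, abs_sub_comm]
    _ ≤ 1/Real.sqrt n + Real.sqrt (2/Real.sqrt n) := add_le_add hd2 himb
  have e1 : 1/Real.sqrt n ≤ 1/R := one_div_le_one_div_of_le hR hnR
  have e2 : Real.sqrt (2/Real.sqrt n) ≤ Real.sqrt (2/R) :=
    Real.sqrt_le_sqrt (div_le_div_of_nonneg_left (by norm_num) hR hnR)
  have f1 : 1/R < ε/2 := by
    rw [div_lt_div_iff₀ hR (by norm_num)]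
    have h8 : (0:ℝ) < 8/ε := by positivity
    have hmul : ε * R = ε + 2 + 8/ε := by rw [hR_def]; field_simp
    calc (1:ℝ) * 2 = 2 := one_mul 2
    _ < ε + 2 + 8/ε := by linarith
    _ = ε * R := hmul.symm
  have f2 : Real.sqrt (2/R) ≤ ε/2 := by
    rw [show ε/2 = Real.sqrt ((ε/2)^2) from (Real.sqrt_sq (by positivity)).symm]
    apply Real.sqrt_le_sqrt
    rw [div_le_iff₀ hR]
    have h10 : 8/ε^2 ≤ R := by
      rw [hR_def]
      have hp : (0:ℝ) ≤ 1 + 2/ε := by positivity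
      linarith
    have h11 : ε^2/4 * (8/ε^2) = 2 := by field_simp; ring
    have h12 := mul_le_mul_of_nonneg_left h10 (by positivity : (0:ℝ) ≤ ε^2/4)
    calc (2:ℝ) = ε^2/4 * (8/ε^2) := h11.symm
    _ ≤ ε^2/4 * R := h12
    _ = (ε/2)^2 * R := by ring
  calc ‖ω - ⟨x0/2, σ*s⟩‖ = ‖ω - ⟨x0/2, σ*s⟩‖ := rfl
  _ ≤ 1/Real.sqrt n + Real.sqrt (2/Real.sqrt n) := hfin
  _ ≤ 1/R + Real.sqrt (2/R) := add_le_add e1 e2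
  _ < ε/2 + ε/2 := by linarith [f1, f2]
  _ = ε := by ring
end

section
/- Let n be a natural number and V an n×n real matrix such that det(Vᵀ - V) ≠ 0. Let M be the n×n complex matrix M = i · ((Vᵀ - V) mapped entrywise into ℂ). Then M is Hermitian, M is invertible, n is even, and among the n real eigenvalues of M (counted with multiplicity), exactly n/2 are positive and exactly n/2 are negative; in particular the signature of M (number of positive eigenvalues minus number of negative eigenvalues) is zero. -/
open Matrix Polynomial

lemma my_charpoly_diagonal {m : ℕ} (d : Fin m → ℂ) :
    (Matrix.diagonal d).charpoly = ∏ i, (X - C (d i)) := by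
  have : (Matrix.diagonal d).charmatrix = Matrix.diagonal (fun i => X - C (d i)) := by
    ext i j
    by_cases h : i = j <;>
      simp [Matrix.charmatrix_apply, Matrix.diagonal_apply, h]
  rw [Matrix.charpoly, this, Matrix.det_diagonal]

lemma my_charpoly_conj {m : ℕ} (U D : Matrix (Fin m) (Fin m) ℂ) (hU : U * star U = 1) :
    (U * D * star U).charpoly = D.charpoly := by
  have hcomm : ∀ B : Matrix (Fin m) (Fin m) ℂ[X],
      B * (Matrix.scalar (Fin m)) X = (Matrix.scalar (Fin m)) X * B := fun B =>
    ((Matrix.scalar_commute (X : ℂ[X]) (fun r' => Commute.all _ _) B).eq).symm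
  have hC : Matrix.charmatrix (U * D * star U)
      = (C : ℂ →+* ℂ[X]).mapMatrix U * Matrix.charmatrix D
          * (C : ℂ →+* ℂ[X]).mapMatrix (star U) := by
    rw [Matrix.charmatrix, Matrix.charmatrix, mul_sub, sub_mul]
    congr 1
    · rw [hcomm, mul_assoc, ← RingHom.map_mul, hU, RingHom.map_one, mul_one]
    · rw [← RingHom.map_mul, ← RingHom.map_mul]
  rw [Matrix.charpoly, Matrix.charpoly, hC, Matrix.det_mul, Matrix.det_mul,
    mul_comm, ← mul_assoc, ← Matrix.det_mul, ← RingHom.map_mul,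
    mul_eq_one_comm.mp hU, RingHom.map_one, Matrix.det_one, one_mul]

lemma my_charpoly_transpose {m : ℕ} (A : Matrix (Fin m) (Fin m) ℂ) :
    Aᵀ.charpoly = A.charpoly := by
  rw [Matrix.charpoly, Matrix.charpoly, ← Matrix.det_transpose (Matrix.charmatrix Aᵀ)]
  congr 1
  ext i j
  have h' : (j = i) ↔ (i = j) := eq_comm
  by_cases h : i = j <;>
    simp [Matrix.charmatrix_apply, Matrix.diagonal_apply, h, h']

lemma my_roots_prod {m : ℕ} (f : Fin m → ℝ) :
    (∏ i, (X - C ((f i : ℝ) : ℂ))).roots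
      = Finset.univ.val.map (fun i => ((f i : ℝ) : ℂ)) := by
  rw [Finset.prod_eq_multiset_prod]
  rw [show Finset.univ.val.map (fun i => X - C ((f i : ℝ) : ℂ))
      = (Finset.univ.val.map (fun i => ((f i : ℝ) : ℂ))).map (fun a => X - C a) from
    by rw [Multiset.map_map]; rfl]
  exact Polynomial.roots_multiset_prod_X_sub_C _

/-- If `V` is a real square matrix with `det (Vᵀ - V) ≠ 0`, then the Hermitian matrix
`i (Vᵀ - V)` is invertible, has even size, and has signature zero: exactly half of its
eigenvalues are positive and half are negative. -/
theorem signature_zero_of_skew_part_nonsingular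
    (n : ℕ) (V : Matrix (Fin n) (Fin n) ℝ) (h : (Vᵀ - V).det ≠ 0) :
    ∃ hM : (Complex.I • (Vᵀ - V).map Complex.ofReal).IsHermitian,
      IsUnit (Complex.I • (Vᵀ - V).map Complex.ofReal) ∧ Even n ∧
      Fintype.card {i : Fin n // 0 < hM.eigenvalues i} = n / 2 ∧
      Fintype.card {i : Fin n // hM.eigenvalues i < 0} = n / 2 ∧
      (Fintype.card {i : Fin n // 0 < hM.eigenvalues i} : ℤ) -
        (Fintype.card {i : Fin n // hM.eigenvalues i < 0} : ℤ) = 0 := by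
  set M : Matrix (Fin n) (Fin n) ℂ := Complex.I • (Vᵀ - V).map Complex.ofReal with hMdef
  have hskew : ∀ i j, (Vᵀ - V) j i = -((Vᵀ - V) i j) := by
    intro i j; simp [Matrix.sub_apply, Matrix.transpose_apply]
  have hM : M.IsHermitian := by
    show Mᴴ = M
    ext i j
    simp only [hMdef, Matrix.conjTranspose_apply, Matrix.smul_apply, Matrix.map_apply,
      smul_eq_mul, star_mul', Complex.star_def, Complex.conj_I, Complex.conj_ofReal]
    rw [hskew i j]
    push_cast
    ring
  have hMT : Mᵀ = -M := by
    ext i j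
    simp only [hMdef, Matrix.transpose_apply, Matrix.smul_apply, Matrix.map_apply,
      Matrix.neg_apply, smul_eq_mul]
    rw [hskew i j]
    push_cast
    ring
  -- determinant is nonzero
  have hdet : M.det ≠ 0 := by
    have hmapdet : ((Vᵀ - V).map Complex.ofReal).det = ((Vᵀ - V).det : ℂ) :=
      (RingHom.map_det Complex.ofRealHom (Vᵀ - V)).symm
    rw [hMdef, Matrix.det_smul, hmapdet]
    simp [Complex.I_ne_zero, h]
  have hunit : IsUnit M := (Matrix.isUnit_iff_isUnit_det M).mpr (isUnit_iff_ne_zero.mpr hdet)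
  -- the eigenvalues are nonzero
  have hnz : ∀ i, hM.eigenvalues i ≠ 0 := by
    intro i hi
    apply hdet
    rw [hM.det_eq_prod_eigenvalues]
    exact Finset.prod_eq_zero (Finset.mem_univ i) (by rw [hi]; simp)
  -- the multiset of eigenvalues is invariant under negation
  have E : Finset.univ.val.map hM.eigenvalues = Finset.univ.val.map (fun i => -hM.eigenvalues i) := by
    set U : Matrix (Fin n) (Fin n) ℂ := (hM.eigenvectorUnitary : Matrix (Fin n) (Fin n) ℂ)
      with hUdef
    have hU : U * star U = 1 := (Matrix.mem_unitaryGroup_iff).mp hM.eigenvectorUnitary.2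
    have hspec := hM.spectral_theorem
    have hdiag : (RCLike.ofReal ∘ hM.eigenvalues : Fin n → ℂ) = fun i => ((hM.eigenvalues i : ℝ) : ℂ) := rfl
    have h1 : M.charpoly = ∏ i, (X - C ((hM.eigenvalues i : ℝ) : ℂ)) := by
      conv_lhs => rw [hspec, Unitary.conjStarAlgAut_apply]
      rw [← hUdef, my_charpoly_conj _ _ hU, hdiag, my_charpoly_diagonal]
    have hdneg : -(Matrix.diagonal (RCLike.ofReal ∘ hM.eigenvalues : Fin n → ℂ))
        = Matrix.diagonal (fun i => ((-hM.eigenvalues i : ℝ) : ℂ)) := by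
      ext i j
      by_cases hij : i = j <;> simp [Matrix.diagonal_apply, hij]
    have h2 : (-M).charpoly = ∏ i, (X - C ((-hM.eigenvalues i : ℝ) : ℂ)) := by
      have hrep : -M = U * Matrix.diagonal (fun i => ((-hM.eigenvalues i : ℝ) : ℂ)) * star U := by
        conv_lhs => rw [hspec, Unitary.conjStarAlgAut_apply]
        rw [← hUdef, ← hdneg, Matrix.mul_neg, Matrix.neg_mul]
      rw [hrep, my_charpoly_conj _ _ hU, my_charpoly_diagonal]
    have h3 : (∏ i, (X - C ((hM.eigenvalues i : ℝ) : ℂ))) = ∏ i, (X - C ((-hM.eigenvalues i : ℝ) : ℂ)) := by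
      rw [← h1, ← h2, ← hMT, my_charpoly_transpose]
    have h4 := congrArg Polynomial.roots h3
    rw [my_roots_prod hM.eigenvalues, my_roots_prod (fun i => -hM.eigenvalues i)] at h4
    have h5 := congrArg (Multiset.map Complex.re) h4
    rw [Multiset.map_map, Multiset.map_map] at h5
    simpa using h5
  -- counting positive and negative eigenvalues
  have hcard : ∀ p : Fin n → Prop, ∀ _ : DecidablePred p,
      Fintype.card {i : Fin n // p i} = Multiset.countP p Finset.univ.val := by
    intro p hp
    rw [Fintype.card_subtype]
    simp [Finset.card, Finset.filter, Multiset.countP_eq_card_filter]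
  have h1 : Multiset.countP (fun x : ℝ => 0 < x) (Finset.univ.val.map hM.eigenvalues)
      = (Finset.univ.val.filter fun i => 0 < hM.eigenvalues i).card := Multiset.countP_map _ _ _
  have h2 : Multiset.countP (fun x : ℝ => 0 < x) (Finset.univ.val.map (fun i => -hM.eigenvalues i))
      = (Finset.univ.val.filter fun i => 0 < -hM.eigenvalues i).card := Multiset.countP_map _ _ _
  rw [E, h2] at h1
  have hfilt : (Finset.univ.val.filter fun i => 0 < -hM.eigenvalues i)
      = (Finset.univ.val.filter fun i => hM.eigenvalues i < 0) :=
    Multiset.filter_congr (fun x _ => by simp [neg_pos])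
  rw [hfilt] at h1
  have hpos : Fintype.card {i : Fin n // 0 < hM.eigenvalues i}
      = Fintype.card {i : Fin n // hM.eigenvalues i < 0} := by
    rw [hcard _ _, hcard _ _, Multiset.countP_eq_card_filter, Multiset.countP_eq_card_filter, h1]
  have hneg' : Fintype.card {i : Fin n // hM.eigenvalues i < 0}
      = n - Fintype.card {i : Fin n // 0 < hM.eigenvalues i} := by
    rw [show Fintype.card {i : Fin n // hM.eigenvalues i < 0}
        = Fintype.card {i : Fin n // ¬ 0 < hM.eigenvalues i} from Fintype.card_congr
      (Equiv.subtypeEquivRight (fun i => ⟨fun h => not_lt_of_gt h,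
        fun h => ((hnz i).lt_or_gt).resolve_right h⟩)),
      Fintype.card_subtype_compl, Fintype.card_fin]
  have hle : Fintype.card {i : Fin n // 0 < hM.eigenvalues i} ≤ n := by
    simpa using Fintype.card_subtype_le (fun i : Fin n => 0 < hM.eigenvalues i)
  refine ⟨hM, hunit, ⟨Fintype.card {i : Fin n // 0 < hM.eigenvalues i}, by omega⟩, by omega, by omega, by omega⟩
end

section
/- Let n be a natural number and M an n×n integer matrix that is skew-symmetric (Mᵀ = -M) and unimodular (det M = 1). Then n is even, say n = 2g, and there exists an invertible integer matrix P (i.e., P with det P a unit of ℤ) such that P * M * Pᵀ, after reindexing by a bijection Fin n ≃ Fin g × Fin 2, equals the block-diagonal matrix with g identical 2×2 blocks, each block being the standard symplectic block with entries 0, 1 in the first row and -1, 0 in the second row. -/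
open Matrix

set_option linter.unusedSectionVars false
set_option maxHeartbeats 1000000

section Bform
variable {ι : Type*} [Fintype ι]

/-- The bilinear form `x ⬝ᵥ M *ᵥ y` as a bundled bilinear map. -/
def Bform (M : Matrix ι ι ℤ) : (ι → ℤ) →ₗ[ℤ] (ι → ℤ) →ₗ[ℤ] ℤ :=
  LinearMap.mk₂ ℤ (fun x y => x ⬝ᵥ M.mulVec y)
    (fun x x' y => add_dotProduct x x' _)
    (fun c x y => smul_dotProduct c x _)
    (fun x y y' => by simp only [mulVec_add, dotProduct_add])
    (fun c x y => by simp only [mulVec_smul, dotProduct_smul])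

@[simp] lemma Bform_apply (M : Matrix ι ι ℤ) (x y : ι → ℤ) :
    Bform M x y = x ⬝ᵥ M.mulVec y := rfl

lemma Bform_skew {M : Matrix ι ι ℤ} (h : Mᵀ = -M) (x y : ι → ℤ) :
    Bform M y x = - Bform M x y := by
  have hM : M = -Mᵀ := by rw [h, neg_neg]
  simp only [Bform_apply, dotProduct_mulVec]
  nth_rewrite 1 [hM]
  rw [Matrix.vecMul_neg, vecMul_transpose, neg_dotProduct, dotProduct_comm, dotProduct_mulVec]

lemma Bform_self {M : Matrix ι ι ℤ} (h : Mᵀ = -M) (x : ι → ℤ) :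
    Bform M x x = 0 := by
  have := Bform_skew h x x; omega

lemma gram_entry (M Q : Matrix ι ι ℤ) (i j : ι) :
    (Q * M * Qᵀ) i j = Bform M (Q i) (Q j) := by
  simp [Matrix.mul_apply, Bform_apply, dotProduct, mulVec, Finset.mul_sum, Finset.sum_mul]
  rw [Finset.sum_comm]
  congr 1; ext k; congr 1; ext l; ring

end Bform

/-- Combine `Fin 2 ⊕ (Fin g × Fin 2)` into `Fin (g+1) × Fin 2`. -/
def combineEquiv (g : ℕ) : (Fin 2 ⊕ (Fin g × Fin 2)) ≃ (Fin (g+1) × Fin 2) where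
  toFun x := Sum.elim (fun s => ((0 : Fin (g+1)), s)) (fun p => (p.1.succ, p.2)) x
  invFun p := Fin.cases (Sum.inl p.2) (fun k => Sum.inr (k, p.2)) p.1
  left_inv x := by rcases x with s | ⟨k, s⟩ <;> simp
  right_inv p := by
    obtain ⟨k, s⟩ := p
    induction k using Fin.cases with
    | zero => simp
    | succ k => simp

theorem aux_symplectic : ∀ (g : ℕ) (M : Matrix (Fin (2*g)) (Fin (2*g)) ℤ), Mᵀ = -M → M.det = 1 →
    ∃ P : Matrix (Fin (2*g)) (Fin (2*g)) ℤ, IsUnit P.det ∧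
      ∃ e : Fin (2*g) ≃ Fin g × Fin 2,
        ∀ i j, (P * M * Pᵀ) i j =
          if (e i).1 = (e j).1 then !![0, 1; -1, 0] (e i).2 (e j).2 else 0 := by
  intro g
  induction g with
  | zero =>
    intro M _ _
    haveI : IsEmpty (Fin (2*0)) := by rw [Nat.mul_zero]; infer_instance
    exact ⟨1, by simp, Equiv.equivOfIsEmpty _ _, fun i => isEmptyElim i⟩
  | succ g IH =>
    intro M hskew hdet
    have hMdet : IsUnit M.det := by rw [hdet]; exact isUnit_one
    haveI : Invertible M := M.invertibleOfIsUnitDet hMdet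
    have hnn : 2*(g+1) = 2 + 2*g := by ring
    let σ : Fin (2*(g+1)) ≃ (Fin 2 ⊕ Fin (2*g)) := (finCongr hnn).trans finSumFinEquiv.symm
    let i0 : Fin (2*(g+1)) := ⟨0, by omega⟩
    let f : Fin 2 → (Fin (2*(g+1)) → ℤ) := ![Pi.single i0 1, M⁻¹ *ᵥ Pi.single i0 1]
    set B := Bform M with hB
    have hf0 : f 0 = Pi.single i0 1 := rfl
    have hf1 : f 1 = M⁻¹ *ᵥ Pi.single i0 1 := rfl
    have hB00 : B (f 0) (f 0) = 0 := Bform_self hskew _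
    have hB11 : B (f 1) (f 1) = 0 := Bform_self hskew _
    have hB01 : B (f 0) (f 1) = 1 := by
      rw [hB, hf0, hf1, Bform_apply, mulVec_mulVec, Matrix.mul_nonsing_inv _ hMdet, one_mulVec]
      simp [dotProduct, Pi.single_apply]
    have hB10 : B (f 1) (f 0) = -1 := by rw [Bform_skew hskew, hB01]
    -- the complement
    set K : Submodule ℤ (Fin (2*(g+1)) → ℤ) :=
      LinearMap.ker (B.flip (f 0)) ⊓ LinearMap.ker (B.flip (f 1)) with hKdef
    have hKmem : ∀ x : (Fin (2*(g+1)) → ℤ), x ∈ K ↔ B x (f 0) = 0 ∧ B x (f 1) = 0 := by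
      intro x
      simp [hKdef, Submodule.mem_inf, LinearMap.mem_ker, LinearMap.flip_apply]
    set πL : (Fin (2*(g+1)) → ℤ) →ₗ[ℤ] (Fin (2*(g+1)) → ℤ) :=
      LinearMap.id - (B.flip (f 1)).smulRight (f 0) + (B.flip (f 0)).smulRight (f 1) with hπdef
    have hπ : ∀ x, πL x = x - B x (f 1) • f 0 + B x (f 0) • f 1 := by
      intro x
      simp [hπdef, LinearMap.sub_apply, LinearMap.add_apply, LinearMap.smulRight_apply,
        LinearMap.flip_apply]
    have hπK : ∀ x, πL x ∈ K := by
      intro x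
      rw [hKmem]
      constructor
      · have : B (πL x) (f 0)
            = B x (f 0) - B x (f 1) * B (f 0) (f 0) + B x (f 0) * B (f 1) (f 0) := by
          rw [hπ]
          simp only [map_add, map_sub, _root_.map_smul, LinearMap.add_apply,
            LinearMap.sub_apply, LinearMap.smul_apply, smul_eq_mul]
        rw [this, hB00, hB10]; ring
      · have : B (πL x) (f 1)
            = B x (f 1) - B x (f 1) * B (f 0) (f 1) + B x (f 0) * B (f 1) (f 1) := by
          rw [hπ]
          simp only [map_add, map_sub, _root_.map_smul, LinearMap.add_apply,
            LinearMap.sub_apply, LinearMap.smul_apply, smul_eq_mul]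
        rw [this, hB01, hB11]; ring
    -- the linear equivalence (Fin (2*(g+1)) → ℤ) ≃ (Fin 2 → ℤ) × K
    set A : (Fin (2*(g+1)) → ℤ) →ₗ[ℤ] (Fin 2 → ℤ) :=
      LinearMap.pi (fun s => ![B.flip (f 1), -(B.flip (f 0))] s) with hAdef
    have hA : ∀ x, A x = ![B x (f 1), -(B x (f 0))] := by
      intro x
      funext s
      induction s using Fin.cases with
      | zero => simp [hAdef, LinearMap.pi_apply, LinearMap.flip_apply]
      | succ s =>
        have : s = 0 := Subsingleton.elim s 0
        subst this
        simp [hAdef, LinearMap.pi_apply, LinearMap.flip_apply]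
    set F : (Fin (2*(g+1)) → ℤ) →ₗ[ℤ] (Fin 2 → ℤ) × K := A.prod (πL.codRestrict K hπK) with hFdef
    set G : ((Fin 2 → ℤ) × K) →ₗ[ℤ] (Fin (2*(g+1)) → ℤ) :=
      ((LinearMap.proj 0).comp (LinearMap.fst ℤ (Fin 2 → ℤ) K)).smulRight (f 0)
      + ((LinearMap.proj 1).comp (LinearMap.fst ℤ (Fin 2 → ℤ) K)).smulRight (f 1)
      + K.subtype.comp (LinearMap.snd ℤ (Fin 2 → ℤ) K) with hGdef
    have hG : ∀ p : (Fin 2 → ℤ) × K, G p = p.1 0 • f 0 + p.1 1 • f 1 + (p.2 : (Fin (2*(g+1)) → ℤ)) := by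
      intro p
      simp [hGdef, LinearMap.add_apply, LinearMap.smulRight_apply, LinearMap.comp_apply]
    have hBG1 : ∀ p : (Fin 2 → ℤ) × K, B (G p) (f 1) = p.1 0 := by
      intro p
      have hk := ((hKmem p.2).mp p.2.2).2
      rw [hG]
      simp only [map_add, _root_.map_smul, LinearMap.add_apply, LinearMap.smul_apply,
        smul_eq_mul, hB01, hB11, hk]
      ring
    have hBG0 : ∀ p : (Fin 2 → ℤ) × K, B (G p) (f 0) = -(p.1 1) := by
      intro p
      have hk := ((hKmem p.2).mp p.2.2).1
      rw [hG]
      simp only [map_add, _root_.map_smul, LinearMap.add_apply, LinearMap.smul_apply,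
        smul_eq_mul, hB00, hB10, hk]
      ring
    have hFG : F.comp G = LinearMap.id := by
      apply LinearMap.ext
      intro p
      have h1 : A (G p) = p.1 := by
        rw [hA]
        funext s
        induction s using Fin.cases with
        | zero => simp [hBG1 p]
        | succ s =>
          have : s = 0 := Subsingleton.elim s 0
          subst this
          simp [hBG0 p]
      have h2 : πL (G p) = (p.2 : (Fin (2*(g+1)) → ℤ)) := by
        rw [hπ, hBG1, hBG0, hG]
        module
      refine Prod.ext ?_ ?_
      · simpa [hFdef, LinearMap.comp_apply, LinearMap.prod_apply] using h1
      · simp only [hFdef, LinearMap.comp_apply, LinearMap.prod_apply, Pi.prod,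
          LinearMap.id_apply]
        exact Subtype.ext (by simpa [LinearMap.codRestrict_apply] using h2)
    have hGF : G.comp F = LinearMap.id := by
      apply LinearMap.ext
      intro x
      simp only [LinearMap.comp_apply, LinearMap.id_apply]
      rw [hG]
      simp only [hFdef, LinearMap.prod_apply, Function.prod, LinearMap.codRestrict_apply]
      rw [hA, hπ]
      simp only [Matrix.cons_val_zero, Matrix.cons_val_one, Matrix.head_cons]
      module
    set E : (Fin (2*(g+1)) → ℤ) ≃ₗ[ℤ] (Fin 2 → ℤ) × K := LinearEquiv.ofLinear F G hFG hGF with hEdef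
    have hEsymm : ∀ p, E.symm p = G p := fun p => rfl
    -- basis of K and of (Fin (2*(g+1)) → ℤ)
    obtain ⟨m, bK⟩ := Submodule.basisOfPid (Pi.basisFun ℤ (Fin (2*(g+1)))) K
    set bV : Module.Basis (Fin 2 ⊕ Fin m) ℤ (Fin (2*(g+1)) → ℤ) :=
      (Module.Basis.prod (Pi.basisFun ℤ (Fin 2)) bK).map E.symm with hbVdef
    have hm : m = 2*g := by
      have h1 := Module.finrank_eq_card_basis bV
      have h2 : Module.finrank ℤ (Fin (2*(g+1)) → ℤ) = 2*(g+1) := by simp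
      rw [h2] at h1
      simp [Fintype.card_sum] at h1
      omega
    subst hm
    have hbVl : ∀ s : Fin 2, bV (Sum.inl s) = f s := by
      intro s
      rw [hbVdef]
      simp only [Module.Basis.map_apply, Module.Basis.prod_apply, Sum.elim_inl]
      rw [hEsymm, hG]
      induction s using Fin.cases with
      | zero => simp [Pi.basisFun_apply, Pi.single_apply]
      | succ s =>
        have : s = 0 := Subsingleton.elim s 0
        subst this
        simp [Pi.basisFun_apply, Pi.single_apply]
    have hbVr : ∀ j, bV (Sum.inr j) = (bK j : (Fin (2*(g+1)) → ℤ)) := by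
      intro j
      rw [hbVdef]
      simp only [Module.Basis.map_apply, Module.Basis.prod_apply, Sum.elim_inr]
      rw [hEsymm, hG]
      simp
    -- the change of basis matrix
    set Q : Matrix (Fin (2*(g+1))) (Fin (2*(g+1))) ℤ := Matrix.of (fun i j => bV (σ i) j)
      with hQdef
    have hQrow : ∀ i, (Q i : (Fin (2*(g+1)) → ℤ)) = bV (σ i) := fun i => rfl
    have hQdet : IsUnit Q.det := by
      set b' : Module.Basis (Fin (2*(g+1))) ℤ (Fin (2*(g+1)) → ℤ) := bV.reindex σ.symm with hb'def
      have hQ : Q = ((Pi.basisFun ℤ (Fin (2*(g+1)))).toMatrix b')ᵀ := by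
        ext i j
        rw [Matrix.transpose_apply, Module.Basis.toMatrix_apply]
        simp [hb'def, Module.Basis.reindex_apply, Pi.basisFun_repr, hQdef]
      haveI := (Pi.basisFun ℤ (Fin (2*(g+1)))).invertibleToMatrix b'
      rw [hQ, Matrix.det_transpose]
      exact Matrix.isUnit_det_of_invertible _
    -- the Gram matrix in the new basis
    set N : Matrix (Fin (2*g)) (Fin (2*g)) ℤ := Matrix.of (fun a b => B (bK a) (bK b)) with hNdef
    have hJ : ∀ s t : Fin 2, B (f s) (f t) = !![0, 1; -1, 0] s t := by
      simp only [Fin.forall_fin_two]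
      refine ⟨⟨?_, ?_⟩, ?_, ?_⟩ <;> simp [hB00, hB01, hB10, hB11]
    have hG2 : Q * M * Qᵀ = (fromBlocks !![0,1;-1,0] 0 0 N).submatrix σ σ := by
      ext i j
      rw [gram_entry, Matrix.submatrix_apply, hQrow, hQrow]
      rcases hsi : σ i with s | a <;> rcases hsj : σ j with t | b
      · rw [hbVl, hbVl]; exact hJ s t
      · rw [hbVl, hbVr]
        have hk := ((hKmem (bK b)).mp (bK b).2)
        have : B (bK b : (Fin (2*(g+1)) → ℤ)) (f s) = 0 := by fin_cases s <;> simp [hk.1, hk.2]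
        rw [Bform_skew hskew, ← hB, this, neg_zero]
        simp [fromBlocks]
      · rw [hbVr, hbVl]
        have hk := ((hKmem (bK a)).mp (bK a).2)
        have : B (bK a : (Fin (2*(g+1)) → ℤ)) (f t) = 0 := by fin_cases t <;> simp [hk.1, hk.2]
        rw [this]
        simp [fromBlocks]
      · rw [hbVr, hbVr]
        simp only [fromBlocks, Matrix.of_apply, Sum.elim_inr, hNdef, hB]
    have hskewN : Nᵀ = -N := by
      ext a b
      rw [Matrix.transpose_apply]
      show B (bK b) (bK a) = (-N) a b
      rw [Bform_skew hskew, ← hB]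
      simp [hNdef]
    have hdetJ : (!![0,1;-1,0] : Matrix (Fin 2) (Fin 2) ℤ).det = 1 := by
      simp [Matrix.det_fin_two_of]
    have hdetN : N.det = 1 := by
      have h1 : (Q * M * Qᵀ).det = Q.det * Q.det := by
        rw [Matrix.det_mul, Matrix.det_mul, Matrix.det_transpose, hdet]
        ring
      have h2 : Q.det * Q.det = 1 := by
        rcases Int.isUnit_iff.mp hQdet with h | h <;> rw [h] <;> ring
      rw [h2, hG2, Matrix.det_submatrix_equiv_self, Matrix.det_fromBlocks_zero₂₁, hdetJ,
        one_mul] at h1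
      omega
    obtain ⟨P', hP', e', hb'⟩ := IH N hskewN hdetN
    -- assemble
    set R : Matrix (Fin 2 ⊕ Fin (2*g)) (Fin 2 ⊕ Fin (2*g)) ℤ :=
      fromBlocks (1 : Matrix (Fin 2) (Fin 2) ℤ) 0 0 P' with hRdef
    set P : Matrix (Fin (2*(g+1))) (Fin (2*(g+1))) ℤ := R.submatrix σ σ * Q with hPdef
    have hPdet : IsUnit P.det := by
      rw [hPdef, Matrix.det_mul, Matrix.det_submatrix_equiv_self, hRdef,
        Matrix.det_fromBlocks_zero₂₁, Matrix.det_one, one_mul]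
      exact hP'.mul hQdet
    have hPMP : P * M * Pᵀ
        = (fromBlocks !![0,1;-1,0] 0 0 (P' * N * P'ᵀ)).submatrix σ σ := by
      have step1 : P * M * Pᵀ = R.submatrix σ σ * (Q * M * Qᵀ) * (Rᵀ).submatrix σ σ := by
        rw [hPdef, Matrix.transpose_mul, Matrix.transpose_submatrix]
        simp only [Matrix.mul_assoc]
      rw [step1, hG2, Matrix.submatrix_mul_equiv, Matrix.submatrix_mul_equiv]
      rw [hRdef, Matrix.fromBlocks_transpose, Matrix.fromBlocks_multiply,
        Matrix.fromBlocks_multiply]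
      simp [Matrix.transpose_one]
    refine ⟨P, hPdet, σ.trans ((Equiv.sumCongr (Equiv.refl (Fin 2)) e').trans
      (combineEquiv g)), ?_⟩
    intro i j
    set e := σ.trans ((Equiv.sumCongr (Equiv.refl (Fin 2)) e').trans (combineEquiv g)) with hedef
    rw [hPMP, Matrix.submatrix_apply]
    have hei : e i = combineEquiv g (Sum.map id e' (σ i)) := rfl
    have hej : e j = combineEquiv g (Sum.map id e' (σ j)) := rfl
    rw [hei, hej]
    rcases hsi : σ i with s | a <;> rcases hsj : σ j with t | b
    · simp [fromBlocks, combineEquiv]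
    · have h0 : ((0 : Fin (g+1))) ≠ (e' b).1.succ := (Fin.succ_ne_zero _).symm
      simp [fromBlocks, combineEquiv, h0]
    · have h0 : (e' a).1.succ ≠ (0 : Fin (g+1)) := Fin.succ_ne_zero _
      simp [fromBlocks, combineEquiv, h0]
    · have := hb' a b
      simp only [fromBlocks, Sum.map_inr, combineEquiv, Equiv.coe_fn_mk, Sum.elim_inr,
        Matrix.of_apply, Sum.elim_inl]
      rw [this]
      refine if_congr ?_ rfl rfl
      exact ⟨fun h => by simpa using congrArg Fin.succ h, fun h => by simpa [Fin.succ_inj] using h⟩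


/-- A unimodular skew-symmetric integer matrix has even size and is congruent over `ℤ` to a
direct sum of standard symplectic blocks `!![0, 1; -1, 0]`. -/
theorem skew_symmetric_unimodular_congruent_symplectic
    (n : ℕ) (M : Matrix (Fin n) (Fin n) ℤ) (hskew : Mᵀ = -M) (hdet : M.det = 1) :
    ∃ g : ℕ, n = 2 * g ∧
      ∃ P : Matrix (Fin n) (Fin n) ℤ, IsUnit P.det ∧
        ∃ e : Fin n ≃ Fin g × Fin 2,
          ∀ i j : Fin n, (P * M * Pᵀ) i j =
            if (e i).1 = (e j).1 then !![0, 1; -1, 0] (e i).2 (e j).2 else 0 := by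
  have heven : Even n := by
    by_contra hodd
    rw [Nat.not_even_iff_odd] at hodd
    have h1 : M.det = Mᵀ.det := (Matrix.det_transpose M).symm
    rw [hskew, Matrix.det_neg, Fintype.card_fin, hodd.neg_one_pow, hdet] at h1
    omega
  obtain ⟨g, hg⟩ := heven
  have hg' : n = 2 * g := by omega
  subst hg'
  obtain ⟨P, hP, e, he⟩ := aux_symplectic g M hskew hdet
  exact ⟨g, rfl, P, hP, e, he⟩
end

section
/- Let n be a natural number and V an n×n real matrix with det(V - Vᵀ) ≠ 0. Then the set {ω ∈ ℂ : |ω| = 1, ω ≠ 1, and det((1-ω) · V_ℂ + (1-ω⁻¹) · (Vᵀ)_ℂ) = 0} is finite, where V_ℂ denotes the entrywise inclusion of V into ℂ. -/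
open Matrix Polynomial

/-- For a real square matrix `V` with `det (V - Vᵀ) ≠ 0`, the matrix
`W(ω) = (1-ω) V + (1-ω⁻¹) Vᵀ` is singular for only finitely many `ω ≠ 1` on the unit circle. -/
theorem finite_singular_set_on_circle
    (n : ℕ) (V : Matrix (Fin n) (Fin n) ℝ) (h : (V - Vᵀ).det ≠ 0) :
    {ω : ℂ | ‖ω‖ = 1 ∧ ω ≠ 1 ∧
      ((1 - ω) • V.map Complex.ofReal + (1 - ω⁻¹) • (Vᵀ).map Complex.ofReal).det = 0}.Finite := by
  set A : Matrix (Fin n) (Fin n) ℂ := V.map Complex.ofReal with hA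
  set B : Matrix (Fin n) (Fin n) ℂ := (Vᵀ).map Complex.ofReal with hB
  -- the Alexander polynomial  Q(t) = det (A - t B)
  set Q : Polynomial ℂ :=
    (Matrix.of fun i j => Polynomial.C (A i j) - Polynomial.X * Polynomial.C (B i j)).det with hQ
  have hQeval : ∀ z : ℂ, Q.eval z = (A - z • B).det := by
    intro z
    have := RingHom.map_det (Polynomial.evalRingHom z)
      (Matrix.of fun i j => Polynomial.C (A i j) - Polynomial.X * Polynomial.C (B i j))
    simp only [Polynomial.coe_evalRingHom, RingHom.mapMatrix_apply] at this
    rw [hQ, this]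
    congr 1
    ext i j
    simp [Matrix.map_apply, Matrix.sub_apply, Matrix.smul_apply, smul_eq_mul]
    ring
  have hQne : Q ≠ 0 := by
    intro h0
    apply h
    have h1 : Q.eval 1 = (A - (1:ℂ) • B).det := hQeval 1
    rw [h0] at h1
    simp only [Polynomial.eval_zero, one_smul] at h1
    have : A - B = (V - Vᵀ).map Complex.ofReal := by
      rw [hA, hB]; ext i j; simp
    rw [this] at h1
    have h2 := RingHom.map_det Complex.ofRealHom (V - Vᵀ)
    simp only [RingHom.mapMatrix_apply] at h2
    rw [show (Complex.ofReal : ℝ → ℂ) = ⇑Complex.ofRealHom from rfl, ← h2,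
      Complex.ofRealHom_eq_coe] at h1
    exact_mod_cast h1.symm
  have hroots : Set.Finite {z : ℂ | Q.IsRoot z} := Polynomial.finite_setOf_isRoot hQne
  have hsub : {ω : ℂ | ‖ω‖ = 1 ∧ ω ≠ 1 ∧
      ((1 - ω) • A + (1 - ω⁻¹) • B).det = 0} ⊆ (fun ω : ℂ => ω⁻¹) ⁻¹' {z : ℂ | Q.IsRoot z} := by
    rintro ω ⟨habs, hne1, hdet⟩
    have hω0 : ω ≠ 0 := by
      intro h0; rw [h0] at habs; simp at habs
    have hinv : (1 - ω⁻¹) = -((1 - ω) * ω⁻¹) := by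
      field_simp
      ring
    have hfac : (1 - ω) • A + (1 - ω⁻¹) • B = (1 - ω) • (A - ω⁻¹ • B) := by
      rw [hinv, neg_smul, ← sub_eq_add_neg, ← smul_smul, ← smul_sub]
    rw [hfac, Matrix.det_smul] at hdet
    have h1ω : (1 - ω) ≠ 0 := sub_ne_zero.mpr (Ne.symm hne1)
    have : (A - ω⁻¹ • B).det = 0 := by
      rcases mul_eq_zero.mp hdet with hc | hc
      · exact absurd hc (pow_ne_zero (Fintype.card (Fin n)) h1ω)
      · exact hc
    show Q.IsRoot ω⁻¹
    rw [Polynomial.IsRoot, hQeval]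
    exact this
  exact (hroots.preimage (Set.injOn_of_injective inv_injective)).subset hsub
end

section
/- Let σ : ℝ → ℤ be a function and F ⊆ ℝ a finite set with 0 ∉ F. Assume: (i) σ is locally constant on ℝ \ F, i.e., for every x ∉ F there exists ε > 0 such that σ is constant on the open interval (x-ε, x+ε); (ii) σ(0) = 0; (iii) σ is balanced at each discontinuity: for every x ∈ F there exist ε > 0 and integers l, r such that σ equals l on (x-ε, x), σ equals r on (x, x+ε), and 2·σ(x) = l + r. Then: (a) for every x ∉ F, σ(x) is even; and (b) for every x ∈ F, with l and r as in (iii), the integers l and r have the same parity, r - l is even, and σ(x) ≡ (r - l)/2 (mod 2). -/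
/-- A balanced integer-valued step function vanishing at `0` is even-valued away from its
discontinuities, and at each discontinuity the one-sided limits have equal parity and the
value is congruent mod 2 to the jump `(r - l)/2`. -/
theorem balanced_step_function_parity
    (σ : ℝ → ℤ) (F : Set ℝ) (hF : F.Finite) (h0F : (0 : ℝ) ∉ F)
    (hloc : ∀ x : ℝ, x ∉ F → ∃ ε > (0 : ℝ), ∀ y : ℝ, x - ε < y → y < x + ε → σ y = σ x)
    (h0 : σ 0 = 0)
    (hbal : ∀ x ∈ F, ∃ ε > (0 : ℝ), ∃ l r : ℤ,
      (∀ y : ℝ, x - ε < y → y < x → σ y = l) ∧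
      (∀ y : ℝ, x < y → y < x + ε → σ y = r) ∧
      2 * σ x = l + r) :
    (∀ x : ℝ, x ∉ F → Even (σ x)) ∧
    (∀ x ∈ F, ∀ ε > (0 : ℝ), ∀ l r : ℤ,
      (∀ y : ℝ, x - ε < y → y < x → σ y = l) →
      (∀ y : ℝ, x < y → y < x + ε → σ y = r) →
      l % 2 = r % 2 ∧ Even (r - l) ∧ σ x ≡ (r - l) / 2 [ZMOD 2]) := by
  classical
  choose! ε' hε' l' r' hl' hr' hlr' using hbal
  -- helper: if σ is constant c on (a, y) with a < y and y ∈ F, then l' y = c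
  have leftval : ∀ y ∈ F, ∀ a : ℝ, a < y → ∀ c : ℤ,
      (∀ z : ℝ, a < z → z < y → σ z = c) → l' y = c := by
    intro y hy a ha c hc
    set z := (max a (y - ε' y) + y) / 2 with hz
    have hmax : max a (y - ε' y) < y := by
      have := hε' y hy
      simp only [max_lt_iff]; constructor <;> linarith
    have hz1 : max a (y - ε' y) < z := by rw [hz]; linarith
    have hz2 : z < y := by rw [hz]; linarith
    have e1 : σ z = l' y := hl' y hy z (lt_of_le_of_lt (le_max_right _ _) hz1) hz2
    have e2 : σ z = c := hc z (lt_of_le_of_lt (le_max_left _ _) hz1) hz2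
    rw [← e1, e2]
  have rightval : ∀ y ∈ F, ∀ b : ℝ, y < b → ∀ c : ℤ,
      (∀ z : ℝ, y < z → z < b → σ z = c) → r' y = c := by
    intro y hy b hb c hc
    set z := (y + min b (y + ε' y)) / 2 with hz
    have hmin : y < min b (y + ε' y) := by
      have := hε' y hy
      simp only [lt_min_iff]; constructor <;> linarith
    have hz1 : y < z := by rw [hz]; linarith
    have hz2 : z < min b (y + ε' y) := by rw [hz]; linarith
    have e1 : σ z = r' y := hr' y hy z hz1 (lt_of_lt_of_le hz2 (min_le_right _ _))
    have e2 : σ z = c := hc z hz1 (lt_of_lt_of_le hz2 (min_le_left _ _))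
    rw [← e1, e2]
  set g : ℝ → ZMod 2 := fun x => if x ∈ F then ((l' x : ℤ) : ZMod 2) else ((σ x : ℤ) : ZMod 2)
    with hg
  have hlr_cast : ∀ x ∈ F, ((l' x : ℤ) : ZMod 2) = ((r' x : ℤ) : ZMod 2) := by
    intro x hx
    rw [ZMod.intCast_eq_intCast_iff']
    have := hlr' x hx
    omega
  have key : IsLocallyConstant g := by
    rw [IsLocallyConstant.iff_exists_open]
    intro x
    by_cases hx : x ∈ F
    · refine ⟨Set.Ioo (x - ε' x) (x + ε' x), isOpen_Ioo, ?_, ?_⟩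
      · constructor <;> [linarith [hε' x hx]; linarith [hε' x hx]]
      · intro y hy
        obtain ⟨hy1, hy2⟩ := hy
        have hgx : g x = ((l' x : ℤ) : ZMod 2) := by rw [hg]; simp [hx]
        rcases lt_trichotomy y x with hlt | heq | hgt
        · rw [hgx]
          by_cases hyF : y ∈ F
          · have : l' y = l' x := by
              refine leftval y hyF (x - ε' x) hy1 (l' x) ?_
              intro z hz1 hz2
              exact hl' x hx z hz1 (hz2.trans hlt)
            rw [hg]; simp [hyF, this]
          · have : σ y = l' x := hl' x hx y hy1 hlt
            rw [hg]; simp [hyF, this]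
        · rw [heq]
        · rw [hgx, hlr_cast x hx]
          by_cases hyF : y ∈ F
          · have : l' y = r' x := by
              refine leftval y hyF x hgt (r' x) ?_
              intro z hz1 hz2
              exact hr' x hx z hz1 (hz2.trans hy2)
            rw [hg]; simp [hyF, this]
          · have : σ y = r' x := hr' x hx y hgt hy2
            rw [hg]; simp [hyF, this]
    · obtain ⟨ε, hε, hconst⟩ := hloc x hx
      refine ⟨Set.Ioo (x - ε) (x + ε), isOpen_Ioo, ⟨by linarith, by linarith⟩, ?_⟩
      intro y hy
      obtain ⟨hy1, hy2⟩ := hy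
      have hgx : g x = ((σ x : ℤ) : ZMod 2) := by rw [hg]; simp [hx]
      by_cases hyF : y ∈ F
      · have hy1' : x - ε < y := hy1
        have : l' y = σ x := by
          refine leftval y hyF (x - ε) hy1' (σ x) ?_
          intro z hz1 hz2
          exact hconst z hz1 (hz2.trans hy2)
        rw [hg]; simp [hyF, hx, this]
      · have : σ y = σ x := hconst y hy1 hy2
        rw [hg]; simp [hyF, hx, this]
  have gconst : ∀ x : ℝ, g x = 0 := by
    intro x
    have := key.apply_eq_of_preconnectedSpace x 0
    rw [this, hg]
    simp [h0F, h0]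
  have even_off : ∀ x : ℝ, x ∉ F → Even (σ x) := by
    intro x hx
    have := gconst x
    rw [hg] at this
    simp only [hx, if_false] at this
    rw [ZMod.intCast_zmod_eq_zero_iff_dvd] at this
    obtain ⟨k, hk⟩ := this
    exact ⟨k, by omega⟩
  refine ⟨even_off, ?_⟩
  intro x hxF ε hε l r hL hR
  -- pick points off F on each side
  have hIol : (Set.Ioo (x - ε) x \ F).Nonempty :=
    ((Set.Ioo_infinite (by linarith)).diff hF).nonempty
  have hIor : (Set.Ioo x (x + ε) \ F).Nonempty :=
    ((Set.Ioo_infinite (by linarith)).diff hF).nonempty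
  obtain ⟨yl, ⟨hyl1, hyl2⟩, hylF⟩ := hIol
  obtain ⟨yr, ⟨hyr1, hyr2⟩, hyrF⟩ := hIor
  have hleven : Even l := by
    have := even_off yl hylF
    rwa [hL yl hyl1 hyl2] at this
  have hreven : Even r := by
    have := even_off yr hyrF
    rwa [hR yr hyr1 hyr2] at this
  obtain ⟨a, ha⟩ := hleven
  obtain ⟨b, hb⟩ := hreven
  have hl'x : l' x = l := leftval x hxF (x - ε) (by linarith) l hL
  have hr'x : r' x = r := rightval x hxF (x + ε) (by linarith) r hR
  have hsum : 2 * σ x = l + r := by rw [← hl'x, ← hr'x]; exact hlr' x hxF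
  refine ⟨by omega, ⟨b - a, by omega⟩, ?_⟩
  show σ x % 2 = ((r - l) / 2) % 2
  omega
end
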